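/- Let S be a semigroup, λ a nonzero cardinal, and n, i positive integers with i ≤ n ≤ λ. For any collection of distinct elements a₁,…,a_i of λ, the set S^{(a₁,…,a_i)}_{(a₁,…,a_i)} of all elements of 𝓘_λ^n(S) whose underlying partial map is the identity on {a₁,…,a_i} is a subsemigroup of 𝓘_λ^n(S), and the map (s₁,…,s_i) ↦ (element with rows (a₁,…,a_i), (s₁,…,s_i), (a₁,…,a_i)) is an isomorphism from the direct power Sⁱ onto this subsemigroup. -/
import Mathlib


open Classical

namespace ISemExt

/-- Carrier for the extension `𝓘_λ^n(S)`: an element is a function assigning to each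
pair `(x,y)` of points of `lam` an optional value in `S` (its labelled graph). -/
def Elem (lam S : Type) : Type := lam → lam → Option S

/-- The zero element (the empty map). -/
def zeroE (lam S : Type) : Elem lam S := fun _ _ => none

/-- Multiplication in `𝓘_λ^n(S)`: composition of labelled partial maps,
multiplying the labels along composable pairs. -/
noncomputable def mulE {lam S : Type} [Mul S] (f g : Elem lam S) : Elem lam S :=
  fun x z =>
    if h : ∃ y s t, f x y = some s ∧ g y z = some t then
      some (h.choose_spec.choose * h.choose_spec.choose_spec.choose)
    else none

/-- The graph of an element. -/
def graphOf {lam S : Type} (f : Elem lam S) : Set (lam × lam) :=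
  {p | (f p.1 p.2).isSome}

/-- `Valid n f` says that `f` is an element of `𝓘_λ^n(S)`: it is a partial
injective labelled map (in both directions) of rank at most `n`. -/
def Valid {lam S : Type} (n : ℕ) (f : Elem lam S) : Prop :=
  (∀ ⦃x y₁ y₂⦄, (f x y₁).isSome → (f x y₂).isSome → y₁ = y₂) ∧
  (∀ ⦃x₁ x₂ y⦄, (f x₁ y).isSome → (f x₂ y).isSome → x₁ = x₂) ∧
  (graphOf f).Finite ∧ (graphOf f).ncard ≤ n

/-- The element with rows `(a₁,…,a_i)`, `(s₁,…,s_i)`, `(b₁,…,b_i)`. -/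
noncomputable def mk3 {lam S : Type} {i : ℕ} (a : Fin i → lam) (s : Fin i → S)
    (b : Fin i → lam) : Elem lam S :=
  fun x y => if h : ∃ j, a j = x ∧ b j = y then some (s h.choose) else none

section Helpers
variable {lam S : Type} {i : ℕ} {a : Fin i → lam}

lemma mk3_some {s : Fin i → S} {x y : lam} {v : S}
    (h : mk3 a s a x y = some v) : ∃ j, a j = x ∧ a j = y ∧ v = s j := by
  unfold mk3 at h
  split_ifs at h with hc
  exact ⟨hc.choose, hc.choose_spec.1, hc.choose_spec.2,
    (Option.some_injective _ h).symm⟩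

lemma mk3_isSome {s : Fin i → S} {x y : lam}
    (h : (mk3 a s a x y).isSome) : ∃ j, a j = x ∧ a j = y := by
  obtain ⟨v, hv⟩ := Option.isSome_iff_exists.mp h
  obtain ⟨j, h1, h2, _⟩ := mk3_some hv
  exact ⟨j, h1, h2⟩

lemma mk3_apply_self (ha : Function.Injective a) (s : Fin i → S) (j : Fin i) :
    mk3 a s a (a j) (a j) = some (s j) := by
  unfold mk3
  have h : ∃ k, a k = a j ∧ a k = a j := ⟨j, rfl, rfl⟩
  rw [dif_pos h]
  exact congrArg some (congrArg s (ha h.choose_spec.1))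

lemma mk3_graph (ha : Function.Injective a) (s : Fin i → S) :
    graphOf (mk3 a s a) = Set.range (fun j => (a j, a j)) := by
  ext ⟨x, y⟩
  constructor
  · intro h
    obtain ⟨j, hj1, hj2⟩ := mk3_isSome h
    exact ⟨j, by simp only [Prod.mk.injEq]; exact ⟨hj1, hj2⟩⟩
  · rintro ⟨j, hj⟩
    simp only [Prod.mk.injEq] at hj
    simp only [graphOf, Set.mem_setOf_eq, ← hj.1, ← hj.2,
      mk3_apply_self ha s j, Option.isSome_some]

lemma mk3_mul [Semigroup S] (ha : Function.Injective a) (s t : Fin i → S) :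
    mk3 (lam := lam) a (s * t) a = mulE (mk3 a s a) (mk3 a t a) := by
  funext x z
  by_cases hx : ∃ j, a j = x ∧ a j = z
  · obtain ⟨j, hj1, hj2⟩ := hx
    subst hj1
    have hz : z = a j := hj2.symm
    subst hz
    rw [mk3_apply_self ha]
    unfold mulE
    have hcond : ∃ y s' t', mk3 a s a (a j) y = some s' ∧ mk3 a t a y (a j) = some t' :=
      ⟨a j, s j, t j, mk3_apply_self ha s j, mk3_apply_self ha t j⟩
    rw [dif_pos hcond]
    obtain ⟨hs', ht'⟩ := hcond.choose_spec.choose_spec.choose_spec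
    obtain ⟨k, hk1, hk2, hk3⟩ := mk3_some hs'
    obtain ⟨l, hl1, hl2, hl3⟩ := mk3_some ht'
    have hkj : k = j := ha hk1
    have hlj : l = j := ha hl2
    subst hkj; subst hlj
    simp only [Pi.mul_apply, ← hk3, ← hl3]
  · have hl : mk3 a (s * t) a x z = none := by
      unfold mk3; rw [dif_neg hx]
    rw [hl]
    unfold mulE
    rw [dif_neg]
    rintro ⟨y, s', t', hs', ht'⟩
    obtain ⟨k, hk1, hk2, -⟩ := mk3_some hs'
    obtain ⟨l, hl1, hl2, -⟩ := mk3_some ht'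
    have : l = k := ha (hl1.trans hk2.symm)
    subst this
    exact hx ⟨l, hk1, hl2⟩

end Helpers

/-- For distinct `a₁,…,a_i` in `λ`, the set `S^{(a₁,…,a_i)}_{(a₁,…,a_i)}` is a
subsemigroup of `𝓘_λ^n(S)` and the map `(s₁,…,s_i) ↦ (a,s,a)` is an isomorphism
of the direct power `Sⁱ` onto it: it is injective, multiplicative (where `Sⁱ`
carries the pointwise product), its image is exactly this set, and all its
values lie in `𝓘_λ^n(S)`. -/
theorem power_embeds (lam S : Type) [Nonempty lam] [Semigroup S]
    (n i : ℕ) (hn : 0 < n) (hcard : (n : Cardinal) ≤ Cardinal.mk lam)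
    (hi : 0 < i) (hin : i ≤ n)
    (a : Fin i → lam) (ha : Function.Injective a) :
    (∀ s : Fin i → S, Valid n (mk3 a s a)) ∧
    (∀ f ∈ Set.range (fun s : Fin i → S => mk3 (lam := lam) a s a),
      ∀ g ∈ Set.range (fun s : Fin i → S => mk3 (lam := lam) a s a),
        mulE f g ∈ Set.range (fun s : Fin i → S => mk3 (lam := lam) a s a)) ∧
    Function.Injective (fun s : Fin i → S => mk3 (lam := lam) a s a) ∧
    (∀ s t : Fin i → S, mk3 (lam := lam) a (s * t) a = mulE (mk3 a s a) (mk3 a t a)) := by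
  refine ⟨?_, ?_, ?_, fun s t => mk3_mul ha s t⟩
  · intro s
    refine ⟨?_, ?_, ?_, ?_⟩
    · intro x y₁ y₂ h1 h2
      obtain ⟨j, hj1, hj2⟩ := mk3_isSome h1
      obtain ⟨k, hk1, hk2⟩ := mk3_isSome h2
      have : j = k := ha (hj1.trans hk1.symm)
      subst this
      exact hj2.symm.trans hk2
    · intro x₁ x₂ y h1 h2
      obtain ⟨j, hj1, hj2⟩ := mk3_isSome h1
      obtain ⟨k, hk1, hk2⟩ := mk3_isSome h2
      have : j = k := ha (hj2.trans hk2.symm)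
      subst this
      exact hj1.symm.trans hk1
    · rw [mk3_graph ha]; exact Set.finite_range _
    · rw [mk3_graph ha]
      have : Set.range (fun j => (a j, a j)) =
          ↑(Finset.univ.image (fun j : Fin i => (a j, a j))) := by
        ext p; simp
      rw [this, Set.ncard_coe_finset]
      calc (Finset.univ.image fun j : Fin i => (a j, a j)).card
          ≤ Finset.univ.card := Finset.card_image_le
        _ = i := Finset.card_univ.trans (Fintype.card_fin i)
        _ ≤ n := hin
  · rintro f ⟨s, rfl⟩ g ⟨t, rfl⟩
    exact ⟨s * t, (mk3_mul ha s t)⟩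
  · intro s t hst
    funext j
    have h2 : mk3 a s a = mk3 a t a := hst
    have := congrFun (congrFun h2 (a j)) (a j)
    rw [mk3_apply_self ha, mk3_apply_self ha] at this
    exact Option.some_injective _ this


end ISemExt
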